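/- For every subset J ⊆ {0,…,d}, the K-subspace span_K{δ_μ : Σ_k μ(k) = 0 and J ⊆ J(μ)} of V is stable under ρ(x) for every x ∈ 𝔤. -/

import Mathlib

/-- For every subset J of {0,…,d}, the subspace
span_K{δ_μ : Σ_k μ(k) = 0 and J ⊆ J(μ)} of V is stable under ρ(x) for all x ∈ 𝔤. -/
theorem stmt_8 (K : Type) [Field K] [CharZero K] (d : ℕ) (hd : 1 ≤ d)
    (ρ : Matrix (Fin (d+1)) (Fin (d+1)) K →ₗ[K]
        Module.End K ((Fin (d+1) → ℤ) →₀ K))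
    (hρ₁ : ∀ (i j : Fin (d+1)), i ≠ j → ∀ μ : Fin (d+1) → ℤ,
      ρ (Matrix.single i j (1:K)) (Finsupp.single μ (1:K)) =
        (μ j - 1) • Finsupp.single (μ + Pi.single i 1 - Pi.single j 1) (1:K))
    (hρ₂ : ∀ (k : Fin (d+1)) (μ : Fin (d+1) → ℤ),
      ρ (Matrix.single k k (1:K)) (Finsupp.single μ (1:K)) =
        μ k • Finsupp.single μ (1:K))
    (J : Set (Fin (d+1))) :
    ∀ (x : Matrix (Fin (d+1)) (Fin (d+1)) K)
      (v : (Fin (d+1) → ℤ) →₀ K),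
      v ∈ Submodule.span K {w : (Fin (d+1) → ℤ) →₀ K | ∃ μ : Fin (d+1) → ℤ,
          (∑ k, μ k) = 0 ∧ J ⊆ {k | 0 < μ k} ∧ w = Finsupp.single μ (1:K)} →
      ρ x v ∈ Submodule.span K {w : (Fin (d+1) → ℤ) →₀ K | ∃ μ : Fin (d+1) → ℤ,
          (∑ k, μ k) = 0 ∧ J ⊆ {k | 0 < μ k} ∧ w = Finsupp.single μ (1:K)} := by
  set s : Set ((Fin (d+1) → ℤ) →₀ K) := {w : (Fin (d+1) → ℤ) →₀ K | ∃ μ : Fin (d+1) → ℤ,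
      (∑ k, μ k) = 0 ∧ J ⊆ {k | 0 < μ k} ∧ w = Finsupp.single μ (1:K)} with hs
  set S := Submodule.span K s with hS
  -- Step 1: generators are stable
  have key : ∀ (i j : Fin (d+1)) (μ : Fin (d+1) → ℤ), (∑ k, μ k) = 0 →
      J ⊆ {k | 0 < μ k} → ρ (Matrix.single i j (1:K)) (Finsupp.single μ (1:K)) ∈ S := by
    intro i j μ hsum hJ
    by_cases hij : i = j
    · subst hij
      rw [hρ₂ i μ, ← Int.cast_smul_eq_zsmul K]
      exact Submodule.smul_mem _ _ (Submodule.subset_span ⟨μ, hsum, hJ, rfl⟩)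
    · rw [hρ₁ i j hij μ]
      by_cases h1 : μ j = 1
      · rw [h1]
        simp
      · rw [← Int.cast_smul_eq_zsmul K]
        refine Submodule.smul_mem _ _ (Submodule.subset_span ⟨μ + Pi.single i 1 - Pi.single j 1, ?_, ?_, rfl⟩)
        · simp only [Pi.sub_apply, Pi.add_apply, Finset.sum_sub_distrib,
            Finset.sum_add_distrib, Finset.sum_pi_single', Finset.mem_univ, if_true, hsum]
          omega
        · intro k hk
          have hpos : 0 < μ k := hJ hk
          simp only [Set.mem_setOf_eq, Pi.add_apply, Pi.sub_apply, Pi.single_apply]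
          split_ifs with h h' h'
          · exact absurd (h.symm.trans h') hij
          · omega
          · subst h'; omega
          · omega
  -- Step 2: generators stable on all of S
  have key2 : ∀ (i j : Fin (d+1)) (v : (Fin (d+1) → ℤ) →₀ K), v ∈ S →
      ρ (Matrix.single i j (1:K)) v ∈ S := by
    intro i j v hv
    induction hv using Submodule.span_induction with
    | mem w hw =>
        obtain ⟨μ, h1, h2, rfl⟩ := hw
        exact key i j μ h1 h2
    | zero => simp
    | add a b _ _ ha hb => rw [map_add]; exact Submodule.add_mem _ ha hb
    | smul c a _ ha => rw [map_smul]; exact Submodule.smul_mem _ _ ha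
  -- Step 3: general x
  intro x v hv
  have hx : x = ∑ i, ∑ j, (x i j) • Matrix.single i j (1:K) := by
    conv_lhs => rw [Matrix.matrix_eq_sum_single x]
    exact Finset.sum_congr rfl fun i _ => Finset.sum_congr rfl fun j _ => by
      rw [Matrix.smul_single, smul_eq_mul, mul_one]
  rw [hx, map_sum]
  simp only [map_sum, map_smul, LinearMap.coe_sum, Finset.sum_apply, LinearMap.smul_apply]
  refine Submodule.sum_mem _ fun i _ => Submodule.sum_mem _ fun j _ => ?_
  exact Submodule.smul_mem _ _ (key2 i j v hv)
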